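/- arXiv:2310.00921 — 2 statements merged into one kernel-verified Lean document; each statement's English description precedes it below -/
import Mathlib

section
/- There is a group isomorphism Aut_K(K ⋊[φ] Q) ≅ Z¹(Q,K,φ) ⋊ C(Q,K,φ), the semidirect product formed with respect to the action ((σ,κ) • d)(q) = σ(d(κ⁻¹(q))) of C(Q,K,φ) on Z¹(Q,K,φ). -/
/-- The abelian group `Z¹(Q,K,φ)` of 1-cocycles (derivations) `d : Q → K`,
`d(p*q) = d(p) * φ(p)(d(q))`, as a subgroup of `Q → K` under pointwise
multiplication. -/
def wellsZ1 {K Q : Type*} [CommGroup K] [Group Q] (φ : Q →* MulAut K) :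
    Subgroup (Q → K) where
  carrier := {d | ∀ p q : Q, d (p * q) = d p * φ p (d q)}
  one_mem' := by intro p q; simp
  mul_mem' := by
    intro d e hd he p q
    simp only [Pi.mul_apply, hd p q, he p q, map_mul]
    exact mul_mul_mul_comm _ _ _ _
  inv_mem' := by
    intro d hd p q
    simp only [Pi.inv_apply, hd p q, mul_inv_rev, map_inv]
    exact mul_comm _ _

/-- The subgroup `C(Q,K,φ) ≤ Aut K × Aut Q` of compatible pairs:
`σ(φ(q)(k)) = φ(κ(q))(σ(k))`. -/
def wellsC {K Q : Type*} [CommGroup K] [Group Q] (φ : Q →* MulAut K) :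
    Subgroup (MulAut K × MulAut Q) where
  carrier := {c | ∀ (q : Q) (k : K), c.1 (φ q k) = φ (c.2 q) (c.1 k)}
  one_mem' := by intro q k; rfl
  mul_mem' := by
    intro a b ha hb q k
    simp only [Prod.fst_mul, Prod.snd_mul, MulAut.mul_apply]
    rw [hb q k, ha]
  inv_mem' := by
    intro a ha q k
    simp only [Prod.fst_inv, Prod.snd_inv]
    have h := ha (a.2⁻¹ q) (a.1⁻¹ k)
    simp only [MulAut.apply_inv_self] at h
    rw [← h]
    simp [MulAut.inv_apply_self]

/-- Twisting a 1-cocycle by a compatible pair gives a 1-cocycle. -/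
theorem wellsZ1_twist_mem {K Q : Type*} [CommGroup K] [Group Q] (φ : Q →* MulAut K)
    (σ : MulAut K) (κ : MulAut Q)
    (hc : ∀ (q : Q) (k : K), σ (φ q k) = φ (κ q) (σ k))
    (d : Q → K) (hd : d ∈ wellsZ1 φ) :
    (fun q => σ (d (κ⁻¹ q))) ∈ wellsZ1 φ := by
  intro p q
  show σ (d (κ⁻¹ (p * q))) = σ (d (κ⁻¹ p)) * φ p (σ (d (κ⁻¹ q)))
  rw [show (κ⁻¹ : MulAut Q) (p * q) = κ⁻¹ p * κ⁻¹ q from map_mul _ _ _,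
    hd _ _, map_mul, hc]
  rw [MulAut.apply_inv_self]

/-- The inverse of a compatible pair is compatible. -/
theorem wellsC_inv_compat {K Q : Type*} [CommGroup K] [Group Q] (φ : Q →* MulAut K)
    (σ : MulAut K) (κ : MulAut Q)
    (hc : ∀ (q : Q) (k : K), σ (φ q k) = φ (κ q) (σ k)) :
    ∀ (q : Q) (k : K), σ⁻¹ (φ q k) = φ (κ⁻¹ q) (σ⁻¹ k) := by
  intro q k
  have h := hc (κ⁻¹ q) (σ⁻¹ k)
  simp only [MulAut.apply_inv_self] at h
  rw [← h]
  simp [MulAut.inv_apply_self]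

/-- The subgroup `Aut_K (K ⋊[φ] Q)` of automorphisms of the semidirect product
mapping the canonical copy `K × {1}` (the range of `inl`) onto itself. -/
def wellsAutK {K Q : Type*} [CommGroup K] [Group Q] (φ : Q →* MulAut K) :
    Subgroup (MulAut (K ⋊[φ] Q)) where
  carrier := {e | ∀ x : K ⋊[φ] Q,
    x ∈ (SemidirectProduct.inl : K →* K ⋊[φ] Q).range ↔
      e x ∈ (SemidirectProduct.inl : K →* K ⋊[φ] Q).range}
  one_mem' := by intro x; rfl
  mul_mem' := by
    intro a b ha hb x
    simpa only [MulAut.mul_apply] using (hb x).trans (ha (b x))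
  inv_mem' := by
    intro a ha x
    have h := ha (a⁻¹ x)
    simpa only [MulAut.apply_inv_self] using h.symm

/-- The action of `C(Q,K,φ)` on `Z¹(Q,K,φ)` by `((σ,κ) • d)(q) = σ(d(κ⁻¹(q)))`. -/
def wellsCAction {K Q : Type*} [CommGroup K] [Group Q] (φ : Q →* MulAut K) :
    wellsC φ →* MulAut (wellsZ1 φ) where
  toFun c :=
    { toFun := fun d => ⟨fun q => (c : MulAut K × MulAut Q).1
        (d.1 ((c : MulAut K × MulAut Q).2⁻¹ q)),
        wellsZ1_twist_mem φ _ _ c.2 d.1 d.2⟩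
      invFun := fun d => ⟨fun q => (c : MulAut K × MulAut Q).1⁻¹
        (d.1 ((c : MulAut K × MulAut Q).2 q)), by
          have h := wellsZ1_twist_mem φ ((c : MulAut K × MulAut Q).1⁻¹)
            ((c : MulAut K × MulAut Q).2⁻¹)
            (wellsC_inv_compat φ _ _ c.2) d.1 d.2
          simpa only [inv_inv] using h⟩
      left_inv := by
        intro d
        apply Subtype.ext
        funext q
        simp
      right_inv := by
        intro d
        apply Subtype.ext
        funext q
        simp
      map_mul' := by
        intro d e
        apply Subtype.ext
        funext q
        simp }
  map_one' := by
    apply MulEquiv.ext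
    intro d
    apply Subtype.ext
    funext q
    rfl
  map_mul' := by
    intro a b
    apply MulEquiv.ext
    intro d
    apply Subtype.ext
    funext q
    simp [MulAut.mul_apply, mul_inv_rev]

namespace WellsAux

open SemidirectProduct

variable {K Q : Type*} [CommGroup K] [Group Q] (φ : Q →* MulAut K)

theorem mem_inl_range_iff (x : K ⋊[φ] Q) :
    x ∈ (SemidirectProduct.inl : K →* K ⋊[φ] Q).range ↔ x.right = 1 := by
  constructor
  · rintro ⟨k, rfl⟩; simp
  · intro h; exact ⟨x.left, by ext <;> simp [h]⟩

theorem z1_one {d : Q → K} (hd : d ∈ wellsZ1 φ) : d 1 = 1 := by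
  have h := hd 1 1
  simp only [mul_one, map_one, MulAut.one_apply] at h
  exact (left_eq_mul.mp h)

/-- The automorphism of `K ⋊ Q` given by `(k,q) ↦ (σ(k)·d(κ q), κ q)`. -/
def toAut (σ : MulAut K) (κ : MulAut Q) (d : Q → K)
    (hc : ∀ (q : Q) (k : K), σ (φ q k) = φ (κ q) (σ k))
    (hd : d ∈ wellsZ1 φ) : MulAut (K ⋊[φ] Q) where
  toFun x := ⟨σ x.left * d (κ x.right), κ x.right⟩
  invFun x := ⟨σ⁻¹ (x.left * (d x.right)⁻¹), κ⁻¹ x.right⟩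
  left_inv x := by ext <;> simp
  right_inv x := by ext <;> simp
  map_mul' x y := by
    ext
    · show σ (x.left * φ x.right y.left) * d (κ (x.right * y.right)) =
        σ x.left * d (κ x.right) * φ (κ x.right) (σ y.left * d (κ y.right))
      rw [map_mul σ, hc, map_mul κ, hd, map_mul]
      exact mul_mul_mul_comm _ _ _ _
    · show κ (x.right * y.right) = κ x.right * κ y.right
      exact map_mul κ _ _

theorem toAut_mem (σ : MulAut K) (κ : MulAut Q) (d : Q → K)
    (hc : ∀ (q : Q) (k : K), σ (φ q k) = φ (κ q) (σ k))
    (hd : d ∈ wellsZ1 φ) : toAut φ σ κ d hc hd ∈ wellsAutK φ := by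
  intro x
  rw [mem_inl_range_iff, mem_inl_range_iff]
  show x.right = 1 ↔ κ x.right = 1
  exact ⟨fun h => by rw [h, map_one], fun h => κ.injective (by rw [h, map_one])⟩

/-- The homomorphism `Z¹ ⋊ C →* Aut_K (K ⋊ Q)`. -/
def F : (wellsZ1 φ ⋊[wellsCAction φ] wellsC φ) →* wellsAutK φ where
  toFun x := ⟨toAut φ (x.right : MulAut K × MulAut Q).1
      (x.right : MulAut K × MulAut Q).2 x.left.1 x.right.2 x.left.2,
    toAut_mem φ _ _ _ _ _⟩
  map_one' := by
    apply Subtype.ext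
    apply MulEquiv.ext
    intro x
    show (⟨_, _⟩ : K ⋊[φ] Q) = x
    ext <;> simp [toAut]
  map_mul' a b := by
    apply Subtype.ext
    apply MulEquiv.ext
    intro x
    show (⟨_, _⟩ : K ⋊[φ] Q) = _
    ext
    · show ((a.right : MulAut K × MulAut Q).1 * (b.right : MulAut K × MulAut Q).1)
          x.left *
        (a.left.1 * fun q => (a.right : MulAut K × MulAut Q).1
            (b.left.1 ((a.right : MulAut K × MulAut Q).2⁻¹ q)))
          (((a.right : MulAut K × MulAut Q).2 * (b.right : MulAut K × MulAut Q).2)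
            x.right) =
        (a.right : MulAut K × MulAut Q).1
          ((b.right : MulAut K × MulAut Q).1 x.left *
            b.left.1 ((b.right : MulAut K × MulAut Q).2 x.right)) *
        a.left.1 ((a.right : MulAut K × MulAut Q).2
          ((b.right : MulAut K × MulAut Q).2 x.right))
      simp [MulAut.mul_apply, map_mul, mul_comm, mul_left_comm]
    · rfl

theorem F_injective : Function.Injective (F φ) := by
  rw [injective_iff_map_eq_one]
  intro a ha
  have h : ∀ x : K ⋊[φ] Q, toAut φ (a.right : MulAut K × MulAut Q).1
      (a.right : MulAut K × MulAut Q).2 a.left.1 a.right.2 a.left.2 x = x :=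
    fun x => by
      show ((F φ a : wellsAutK φ) : MulAut (K ⋊[φ] Q)) x = x
      rw [ha]; rfl
  have hκ : ∀ q : Q, (a.right : MulAut K × MulAut Q).2 q = q := fun q =>
    congrArg SemidirectProduct.right (h (inr q))
  have hd : ∀ q : Q, a.left.1 q = 1 := by
    intro q
    have h2 := congrArg SemidirectProduct.left (h (inr q))
    simpa [toAut, hκ q] using h2
  have hσ : ∀ k : K, (a.right : MulAut K × MulAut Q).1 k = k := by
    intro k
    have h2 := congrArg SemidirectProduct.left (h (inl k))
    simpa [toAut, hd, z1_one φ a.left.2] using h2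
  ext <;> simp [hd, hσ, hκ]


section Surj

theorem aut_right_inl (e : MulAut (K ⋊[φ] Q)) (he : e ∈ wellsAutK φ) (k : K) :
    (e (inl k)).right = 1 :=
  (mem_inl_range_iff φ _).mp ((he (inl k)).mp ⟨k, rfl⟩)

theorem aut_inv_right_inl (e : MulAut (K ⋊[φ] Q)) (he : e ∈ wellsAutK φ) (k : K) :
    (e⁻¹ (inl k)).right = 1 :=
  (mem_inl_range_iff φ _).mp ((he (e⁻¹ (inl k))).mpr
    (by rw [MulAut.apply_inv_self]; exact ⟨k, rfl⟩))

theorem aut_inl_eq (e : MulAut (K ⋊[φ] Q)) (he : e ∈ wellsAutK φ) (k : K) :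
    e (inl k) = inl ((e (inl k)).left) := by
  ext <;> simp [aut_right_inl φ e he]

theorem aut_inv_inl_eq (e : MulAut (K ⋊[φ] Q)) (he : e ∈ wellsAutK φ) (k : K) :
    e⁻¹ (inl k) = inl ((e⁻¹ (inl k)).left) := by
  ext <;> simp [aut_inv_right_inl φ e he] <;> exact aut_inv_right_inl φ e he k

/-- The automorphism of `K` induced by `e`. -/
def autσ (e : MulAut (K ⋊[φ] Q)) (he : e ∈ wellsAutK φ) : MulAut K where
  toFun k := (e (inl k)).left
  invFun k := (e⁻¹ (inl k)).left
  left_inv k := by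
    show (e⁻¹ (inl ((e (inl k)).left))).left = k
    rw [← aut_inl_eq φ e he, MulAut.inv_apply_self, left_inl]
  right_inv k := by
    show (e (inl ((e⁻¹ (inl k)).left))).left = k
    rw [← aut_inv_inl_eq φ e he, MulAut.apply_inv_self, left_inl]
  map_mul' a b := by
    show (e (inl (a * b))).left = (e (inl a)).left * (e (inl b)).left
    rw [map_mul inl, map_mul e, mul_left, aut_right_inl φ e he, map_one,
      MulAut.one_apply]

theorem inr_eq_inv_mul (x : K ⋊[φ] Q) : inr x.right = (inl x.left)⁻¹ * x := by
  rw [eq_inv_mul_iff_mul_eq, inl_left_mul_inr_right]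

/-- The automorphism of `Q` induced by `e`. -/
def autκ (e : MulAut (K ⋊[φ] Q)) (he : e ∈ wellsAutK φ) : MulAut Q where
  toFun q := (e (inr q)).right
  invFun q := (e⁻¹ (inr q)).right
  left_inv q := by
    show (e⁻¹ (inr ((e (inr q)).right))).right = q
    rw [inr_eq_inv_mul φ (e (inr q)), map_mul, map_inv, MulAut.inv_apply_self]
    simp [mul_right, inv_right, aut_inv_right_inl φ e he]
    exact aut_inv_right_inl φ e he _
  right_inv q := by
    show (e (inr ((e⁻¹ (inr q)).right))).right = q
    rw [inr_eq_inv_mul φ (e⁻¹ (inr q)), map_mul, map_inv, MulAut.apply_inv_self]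
    simp [mul_right, inv_right, aut_right_inl φ e he]
  map_mul' a b := by
    show (e (inr (a * b))).right = (e (inr a)).right * (e (inr b)).right
    rw [map_mul inr, map_mul e, mul_right]

/-- The cocycle induced by `e`. -/
def autd (e : MulAut (K ⋊[φ] Q)) (he : e ∈ wellsAutK φ) : Q → K :=
  fun q => (e (inr ((autκ φ e he)⁻¹ q))).left

theorem autd0_cocycle (e : MulAut (K ⋊[φ] Q)) (p q : Q) : (e (inr (p * q))).left =
    (e (inr p)).left * φ ((e (inr p)).right) ((e (inr q)).left) := by
  rw [map_mul inr, map_mul e, mul_left]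

theorem autd_mem (e : MulAut (K ⋊[φ] Q)) (he : e ∈ wellsAutK φ) :
    autd φ e he ∈ wellsZ1 φ := by
  intro p q
  have hpq : (autκ φ e he)⁻¹ (p * q) = (autκ φ e he)⁻¹ p * (autκ φ e he)⁻¹ q :=
    map_mul _ _ _
  have hp : (e (inr ((autκ φ e he)⁻¹ p))).right = p :=
    MulAut.apply_inv_self Q (autκ φ e he) p
  unfold autd
  rw [hpq, autd0_cocycle φ e, hp]

theorem aut_compat (e : MulAut (K ⋊[φ] Q)) (he : e ∈ wellsAutK φ) (q : Q) (k : K) :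
    autσ φ e he (φ q k) = φ (autκ φ e he q) (autσ φ e he k) := by
  have key : e (inl (φ q k)) = e (inr q) * e (inl k) * (e (inr q))⁻¹ := by
    rw [inl_aut, map_mul, map_mul, map_inv inr, map_inv e]
  have h2 := congrArg SemidirectProduct.left key
  rw [aut_inl_eq φ e he k] at h2
  show (e (inl (φ q k))).left = φ ((e (inr q)).right) ((e (inl k)).left)
  rw [h2]
  simp only [mul_left, mul_right, inv_left, inv_right, left_inl, right_inl,
    mul_one, map_mul, map_inv]
  generalize (e (inr q)).left = A
  generalize hB : φ ((e (inr q)).right) ((e (inl k)).left) = B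
  rw [MulAut.apply_inv_self, mul_comm A B, mul_inv_cancel_right]

theorem F_apply_eq (e : MulAut (K ⋊[φ] Q)) (he : e ∈ wellsAutK φ) :
    ((F φ ⟨⟨autd φ e he, autd_mem φ e he⟩,
    ⟨(autσ φ e he, autκ φ e he), aut_compat φ e he⟩⟩ : wellsAutK φ) :
      MulAut (K ⋊[φ] Q)) = e := by
  apply MulEquiv.ext
  intro x
  show (⟨autσ φ e he x.left * autd φ e he (autκ φ e he x.right),
    autκ φ e he x.right⟩ : K ⋊[φ] Q) = e x
  conv_rhs => rw [← inl_left_mul_inr_right x, map_mul e, aut_inl_eq φ e he]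
  ext
  · rw [mul_left, left_inl, right_inl, map_one, MulAut.one_apply]
    show autσ φ e he x.left * autd φ e he (autκ φ e he x.right) =
      (e (inl x.left)).left * (e (inr x.right)).left
    refine congrArg₂ (· * ·) rfl ?_
    show autd φ e he (autκ φ e he x.right) = (e (inr x.right)).left
    unfold autd
    rw [MulAut.inv_apply_self]
  · rw [mul_right, right_inl, one_mul]
    rfl

theorem F_surjective : Function.Surjective (F φ) := by
  rintro ⟨e, he⟩
  exact ⟨⟨⟨autd φ e he, autd_mem φ e he⟩,
    ⟨(autσ φ e he, autκ φ e he), aut_compat φ e he⟩⟩,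
    Subtype.ext (F_apply_eq φ e he)⟩

end Surj

end WellsAux

/-- There is a group isomorphism
`Aut_K(K ⋊[φ] Q) ≅ Z¹(Q,K,φ) ⋊ C(Q,K,φ)`, the semidirect product formed with
respect to the action `((σ,κ) • d)(q) = σ(d(κ⁻¹(q)))`. -/
theorem wells_autK_semidirect_iso {K Q : Type*} [CommGroup K] [Group Q]
    (φ : Q →* MulAut K) :
    Nonempty (wellsAutK φ ≃* wellsZ1 φ ⋊[wellsCAction φ] wellsC φ) :=
  ⟨(MulEquiv.ofBijective (WellsAux.F φ)
    ⟨WellsAux.F_injective φ, WellsAux.F_surjective φ⟩).symm⟩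
end

section
/- Let σ be an R-linear automorphism of I and κ an R-linear automorphism of N. There exists φ ∈ Aut_I M with φ|_I = σ and π ∘ φ = κ ∘ π if and only if there exists a function h : N → I such that for all x, y ∈ N and all r ∈ R: T_+(κ(x),κ(y)) - σ(T_+(x,y)) = h(κ(x)) + h(κ(y)) - h(κ(x)+κ(y)) and T_r(κ(x)) - σ(T_r(x)) = r • h(κ(x)) - h(r • κ(x)). (This is the exactness of the Wells sequence at Aut I × Aut N for extensions of R-modules.) -/
/-- The additive 2-cocycle `T_+(x,y) = l(x) + l(y) - l(x+y)` of a set-theoretic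
lifting `l` of a surjective linear map `π`; its values lie in `I = ker π`. -/
def wellsTadd {R M N : Type*} [Ring R] [AddCommGroup M] [Module R M]
    [AddCommGroup N] [Module R N] (π : M →ₗ[R] N) (l : N → M)
    (hl : ∀ x, π (l x) = x) (x y : N) : LinearMap.ker π :=
  ⟨l x + l y - l (x + y), by simp [LinearMap.mem_ker, map_add, map_sub, hl]⟩

/-- The scalar 2-cocycle `T_r(x) = r • l(x) - l(r • x)` of a set-theoretic lifting
`l` of a surjective linear map `π`; its values lie in `I = ker π`. -/
def wellsTsmul {R M N : Type*} [Ring R] [AddCommGroup M] [Module R M]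
    [AddCommGroup N] [Module R N] (π : M →ₗ[R] N) (l : N → M)
    (hl : ∀ x, π (l x) = x) (r : R) (x : N) : LinearMap.ker π :=
  ⟨r • l x - l (r • x), by simp [LinearMap.mem_ker, map_sub, map_smul, hl]⟩

/-- Exactness of the Wells sequence at `Aut I × Aut N` for extensions
of `R`-modules: given `σ ∈ Aut_R I` and `κ ∈ Aut_R N`, there exists `φ ∈ Aut_I M`
with `φ|_I = σ` and `π ∘ φ = κ ∘ π` iff there is `h : N → I` such that for all
`x, y ∈ N`, `r ∈ R`:
`T_+(κx,κy) - σ(T_+(x,y)) = h(κx) + h(κy) - h(κx+κy)` and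
`T_r(κx) - σ(T_r(x)) = r • h(κx) - h(r • κx)`. -/
theorem wells_module_exactness {R M N : Type*} [Ring R]
    [AddCommGroup M] [Module R M] [AddCommGroup N] [Module R N]
    (π : M →ₗ[R] N) (hπ : Function.Surjective π)
    (l : N → M) (hl : ∀ x, π (l x) = x)
    (σ : LinearMap.ker π ≃ₗ[R] LinearMap.ker π) (κ : N ≃ₗ[R] N) :
    (∃ φ : M ≃ₗ[R] M, (∀ x, x ∈ LinearMap.ker π ↔ φ x ∈ LinearMap.ker π) ∧
        (∀ a : LinearMap.ker π, φ (a : M) = (σ a : M)) ∧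
        (∀ x : M, π (φ x) = κ (π x))) ↔
      ∃ h : N → LinearMap.ker π,
        (∀ x y : N, wellsTadd π l hl (κ x) (κ y) - σ (wellsTadd π l hl x y) =
          h (κ x) + h (κ y) - h (κ x + κ y)) ∧
        (∀ (r : R) (x : N), wellsTsmul π l hl r (κ x) - σ (wellsTsmul π l hl r x) =
          r • h (κ x) - h (r • κ x)) := by
  constructor
  · rintro ⟨φ, hker, hσ, hπφ⟩
    refine ⟨fun n => ⟨l n - φ (l (κ.symm n)), by
        simp [LinearMap.mem_ker, map_sub, hl, hπφ]⟩, ?_, ?_⟩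
    · intro x y
      have e1 : (σ (wellsTadd π l hl x y) : M) = φ (l x) + φ (l y) - φ (l (x + y)) := by
        rw [← hσ]; simp [wellsTadd, map_add, map_sub]
      have e2 : κ.symm (κ x + κ y) = x + y := by simp [map_add]
      apply Subtype.ext
      push_cast
      rw [e1]
      simp only [wellsTadd, e2, LinearEquiv.symm_apply_apply]
      push_cast
      abel
    · intro r x
      have e1 : (σ (wellsTsmul π l hl r x) : M) = r • φ (l x) - φ (l (r • x)) := by
        rw [← hσ]; simp [wellsTsmul, map_smul, map_sub]
      have e2 : κ.symm (r • κ x) = r • x := by simp [map_smul]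
      apply Subtype.ext
      push_cast
      rw [e1]
      simp only [wellsTsmul, e2, LinearEquiv.symm_apply_apply]
      push_cast
      simp only [smul_sub]
      abel
  · rintro ⟨h, Ha, Hs⟩
    have key : ∀ m : M, m - l (π m) ∈ LinearMap.ker π := fun m => by
      simp [LinearMap.mem_ker, map_sub, hl]
    have key2 : ∀ m₁ m₂ : M, m₁ + m₂ - l (π m₁ + π m₂) ∈ LinearMap.ker π := fun m₁ m₂ => by
      simp [LinearMap.mem_ker, map_sub, map_add, hl]
    have key3 : ∀ (r : R) (m : M), r • m - l (r • π m) ∈ LinearMap.ker π := fun r m => by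
      simp [LinearMap.mem_ker, map_sub, map_smul, hl]
    set f : M → M := fun m =>
      l (κ (π m)) - (h (κ (π m)) : M) + (σ ⟨m - l (π m), key m⟩ : M) with hf
    have hadd : ∀ m₁ m₂ : M, f (m₁ + m₂) = f m₁ + f m₂ := by
      intro m₁ m₂
      have hs : (⟨m₁ + m₂ - l (π m₁ + π m₂), key2 m₁ m₂⟩ : LinearMap.ker π)
          = ⟨m₁ - l (π m₁), key m₁⟩ + ⟨m₂ - l (π m₂), key m₂⟩
            + wellsTadd π l hl (π m₁) (π m₂) := by
        apply Subtype.ext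
        push_cast [wellsTadd]
        abel
      have ha : (h (κ (π m₁) + κ (π m₂)) : M)
          = (h (κ (π m₁)) : M) + (h (κ (π m₂)) : M)
            - ((wellsTadd π l hl (κ (π m₁)) (κ (π m₂)) : M)
              - (σ (wellsTadd π l hl (π m₁) (π m₂)) : M)) := by
        have := congrArg (Subtype.val) (Ha (π m₁) (π m₂))
        push_cast at this
        rw [this]; abel
      simp only [hf, map_add]
      rw [hs, map_add, map_add]
      push_cast [ha]
      simp only [wellsTadd]
      push_cast
      abel
    have hsmul : ∀ (r : R) (m : M), f (r • m) = r • f m := by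
      intro r m
      have hs : (⟨r • m - l (r • π m), key3 r m⟩ : LinearMap.ker π)
          = r • ⟨m - l (π m), key m⟩ + wellsTsmul π l hl r (π m) := by
        apply Subtype.ext
        push_cast [wellsTsmul]
        simp only [smul_sub]
        abel
      have ha : (h (r • κ (π m)) : M)
          = r • (h (κ (π m)) : M)
            - ((wellsTsmul π l hl r (κ (π m)) : M)
              - (σ (wellsTsmul π l hl r (π m)) : M)) := by
        have := congrArg (Subtype.val) (Hs r (π m))
        push_cast at this
        rw [this]; abel
      simp only [hf, map_smul]
      rw [hs, map_add, map_smul]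
      push_cast [ha]
      simp only [wellsTsmul]
      push_cast
      simp only [smul_sub, smul_add]
      abel
    let φL : M →ₗ[R] M :=
      { toFun := f, map_add' := hadd, map_smul' := fun r m => hsmul r m }
    have hmem : ∀ a : LinearMap.ker π, π (a : M) = 0 := fun a => a.2
    have hπf : ∀ m : M, π (f m) = κ (π m) := by
      intro m
      simp [hf, map_add, map_sub, hl, hmem]
    have hl0 : (l 0 : M) ∈ LinearMap.ker π := by simp [LinearMap.mem_ker, hl]
    have hT0 : wellsTadd π l hl 0 0 = ⟨l 0, hl0⟩ := Subtype.ext (by simp [wellsTadd])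
    have h00 : h 0 = ⟨l 0, hl0⟩ - σ ⟨l 0, hl0⟩ := by
      have := Ha 0 0
      simp only [map_zero, add_zero, hT0, add_sub_cancel_right] at this
      exact this.symm
    have hres : ∀ a : LinearMap.ker π, f (a : M) = (σ a : M) := by
      intro a
      have ha0 : π (a : M) = 0 := a.2
      simp only [hf, ha0, map_zero]
      rw [show (⟨(a : M) - l 0, by simp [LinearMap.mem_ker, map_sub, ha0, hl]⟩
            : LinearMap.ker π)
          = a - ⟨l 0, hl0⟩ from Subtype.ext (by simp)]
      rw [h00, map_sub]
      push_cast
      abel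
    have hzero : ∀ m : M, f m = 0 → m = 0 := by
      intro m hm
      have hp : π m = 0 := by
        have h1 := congrArg π hm
        rw [hπf] at h1
        exact κ.map_eq_zero_iff.mp (by simpa using h1)
      have hmK : m ∈ LinearMap.ker π := hp
      have : f ((⟨m, hmK⟩ : LinearMap.ker π) : M) = 0 := hm
      rw [hres] at this
      have : σ (⟨m, hmK⟩ : LinearMap.ker π) = 0 := Subtype.ext this
      have : (⟨m, hmK⟩ : LinearMap.ker π) = 0 := σ.map_eq_zero_iff.mp this
      exact congrArg Subtype.val this
    have hinj : Function.Injective φL := by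
      intro m₁ m₂ hm
      have hm' : f m₁ = f m₂ := hm
      have : f (m₁ - m₂) = 0 := by
        have h2 := hadd (m₁ - m₂) m₂
        rw [sub_add_cancel, hm'] at h2
        exact right_eq_add.mp h2
      have := hzero _ this
      exact sub_eq_zero.mp this
    have hsurj : Function.Surjective φL := by
      intro m'
      have h1 : π (f (l (κ.symm (π m')))) = π m' := by
        rw [hπf]; simp [hl]
      have h2 : m' - f (l (κ.symm (π m'))) ∈ LinearMap.ker π := by
        simp [LinearMap.mem_ker, map_sub, h1]
      refine ⟨l (κ.symm (π m')) + (σ.symm ⟨m' - f (l (κ.symm (π m'))), h2⟩ : M), ?_⟩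
      show f _ = m'
      rw [hadd, hres]
      simp
    refine ⟨LinearEquiv.ofBijective φL ⟨hinj, hsurj⟩, ?_, ?_, ?_⟩
    · intro x
      constructor
      · intro hx
        show f x ∈ LinearMap.ker π
        rw [LinearMap.mem_ker, hπf]
        simp [LinearMap.mem_ker.mp hx]
      · intro hx
        have : π (f x) = 0 := LinearMap.mem_ker.mp hx
        rw [hπf] at this
        exact LinearMap.mem_ker.mpr (by simpa using κ.injective (by simpa using this))
    · intro a
      exact hres a
    · intro m
      exact hπf m
end
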